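/- Let K be a field and q ∈ K an element that is not a root of unity. Let M be the C(q)-module with K-basis {v_n : n ∈ ℕ} ∪ {w_n : n ∈ ℕ} and action a·v_0 = 0, a·v_n = ((qⁿ−1)/(q−1))·v_{n−1} for n ≥ 1, b·v_n = v_{n+1}, a·w_n = qⁿ(w_n + w_{n+1}), b·w_n = (q^{−n}/(1−q))·w_n + (−1)ⁿ v_0; let V = span_K{v_n : n ∈ ℕ} and W = M/V, and for n ∈ ℕ let W_n be the image in W of span_K{w_m : m ≥ n}. Then W = W_0 ⊋ W_1 ⊋ W_2 ⊋ ⋯ is a strictly descending chain, every nonzero C(q)-submodule of W equals W_n for some n (so the submodules of W are linearly ordered by inclusion), and for m ≠ n the modules W_m and W_n are not isomorphic. -/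

import Mathlib

noncomputable section

open FreeAlgebra

/-- Defining relation of the quantized Weyl algebra `C(q)`: `a * b = q • (b * a) + 1`,
where `ι K 0` plays the role of `a` and `ι K 1` plays the role of `b`. -/
inductive QuantizedWeylRel (K : Type) [Field K] (q : K) :
    FreeAlgebra K (Fin 2) → FreeAlgebra K (Fin 2) → Prop
  | rel : QuantizedWeylRel K q (ι K (0 : Fin 2) * ι K (1 : Fin 2))
      (q • (ι K (1 : Fin 2) * ι K (0 : Fin 2)) + 1)

/-- The quantized Weyl algebra `C(q)`. -/
abbrev QuantizedWeyl (K : Type) [Field K] (q : K) : Type :=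
  RingQuot (QuantizedWeylRel K q)

/-- The generator `a` of the quantized Weyl algebra. -/
def QuantizedWeyl.a (K : Type) [Field K] (q : K) : QuantizedWeyl K q :=
  RingQuot.mkAlgHom K (QuantizedWeylRel K q) (ι K (0 : Fin 2))

/-- The generator `b` of the quantized Weyl algebra. -/
def QuantizedWeyl.b (K : Type) [Field K] (q : K) : QuantizedWeyl K q :=
  RingQuot.mkAlgHom K (QuantizedWeylRel K q) (ι K (1 : Fin 2))

def auxToQ {K : Type} [Field K] {q : K} {N : Type} [AddCommGroup N] [Module K N]
    [Module (QuantizedWeyl K q) N] [IsScalarTower K (QuantizedWeyl K q) N]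
    (P : Submodule K N)
    (hA : ∀ x ∈ P, QuantizedWeyl.a K q • x ∈ P)
    (hB : ∀ x ∈ P, QuantizedWeyl.b K q • x ∈ P) : Submodule (QuantizedWeyl K q) N where
  carrier := P
  add_mem' := fun h h' => P.add_mem h h'
  zero_mem' := P.zero_mem
  smul_mem' := by
    have key : ∀ f : FreeAlgebra K (Fin 2), ∀ x ∈ P,
        (RingQuot.mkAlgHom K (QuantizedWeylRel K q) f) • x ∈ P := by
      intro f
      induction f with
      | grade0 r =>
        intro x hx
        rw [AlgHom.commutes, algebraMap_smul]
        exact P.smul_mem r hx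
      | grade1 i =>
        fin_cases i
        · exact hA
        · exact hB
      | mul f g hf hg =>
        intro x hx
        rw [map_mul, mul_smul]
        exact hf _ (hg x hx)
      | add f g hf hg =>
        intro x hx
        rw [map_add, add_smul]
        exact P.add_mem (hf x hx) (hg x hx)
    intro r x hx
    obtain ⟨f, rfl⟩ := RingQuot.mkAlgHom_surjective K (QuantizedWeylRel K q) r
    exact key f x hx

theorem auxToQ_mem {K : Type} [Field K] {q : K} {N : Type} [AddCommGroup N] [Module K N]
    [Module (QuantizedWeyl K q) N] [IsScalarTower K (QuantizedWeyl K q) N]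
    {P : Submodule K N} {hA hB} {x : N} : x ∈ auxToQ (q := q) P hA hB ↔ x ∈ P := Iff.rfl

set_option maxHeartbeats 1000000 in
/-- Let `M` be the `C(q)`-module (`q` not a root of unity) with `K`-basis
`{v_n} ∪ {w_n}` and action as in the paper, let `V` be its `C(q)`-submodule
`span_K{v_n}`, let `W = M/V`, and for `n ∈ ℕ` let `W_n` be the image in `W` of
`span_K{w_m : m ≥ n}`.  Then each `W_n` is a `C(q)`-submodule of `W`,
`W = W_0 ⊋ W_1 ⊋ ⋯` is a strictly descending chain, every nonzero `C(q)`-submodule of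
`W` equals some `W_n` (so the submodules of `W` are linearly ordered by inclusion),
and for `m ≠ n` the modules `W_m`, `W_n` are non-isomorphic. -/
theorem quantizedWeyl_W_submodules (K : Type) [Field K] (q : K) (hq0 : q ≠ 0)
    (hq : ∀ k : ℕ, 0 < k → q ^ k ≠ 1)
    (M : Type) [AddCommGroup M] [Module K M] [Module (QuantizedWeyl K q) M]
    [IsScalarTower K (QuantizedWeyl K q) M]
    (bas : Module.Basis (ℕ ⊕ ℕ) K M)
    (ha0 : QuantizedWeyl.a K q • bas (Sum.inl 0) = (0 : M))
    (hav : ∀ n : ℕ, QuantizedWeyl.a K q • bas (Sum.inl (n + 1)) =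
      ((q ^ (n + 1) - 1) / (q - 1)) • bas (Sum.inl n))
    (hbv : ∀ n : ℕ, QuantizedWeyl.b K q • bas (Sum.inl n) = bas (Sum.inl (n + 1)))
    (haw : ∀ n : ℕ, QuantizedWeyl.a K q • bas (Sum.inr n) =
      q ^ n • (bas (Sum.inr n) + bas (Sum.inr (n + 1))))
    (hbw : ∀ n : ℕ, QuantizedWeyl.b K q • bas (Sum.inr n) =
      ((q ^ n)⁻¹ / (1 - q)) • bas (Sum.inr n) + ((-1 : K) ^ n) • bas (Sum.inl 0))
    (V : Submodule (QuantizedWeyl K q) M)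
    (hV : (V : Set M) = (Submodule.span K (Set.range fun n : ℕ => bas (Sum.inl n)) :
      Submodule K M)) :
    ∃ Wn : ℕ → Submodule (QuantizedWeyl K q) (M ⧸ V),
      (∀ n : ℕ, (Wn n : Set (M ⧸ V)) =
        V.mkQ '' (Submodule.span K ((fun m : ℕ => bas (Sum.inr m)) '' {m : ℕ | n ≤ m}) :
          Submodule K M)) ∧
      Wn 0 = ⊤ ∧
      StrictAnti Wn ∧
      (∀ N : Submodule (QuantizedWeyl K q) (M ⧸ V), N ≠ ⊥ → ∃ n : ℕ, N = Wn n) ∧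
      (∀ m n : ℕ, m ≠ n → IsEmpty ((Wn m) ≃ₗ[QuantizedWeyl K q] (Wn n))) := by
  classical
  -- basic facts about q
  have hq1 : q ≠ 1 := by simpa using hq 1 one_pos
  have h1q : (1 : K) - q ≠ 0 := sub_ne_zero.mpr (Ne.symm hq1)
  have hpowinj : Function.Injective fun n : ℕ => q ^ n := by
    have key : ∀ m n : ℕ, m < n → q ^ m ≠ q ^ n := by
      intro m n hmn h
      have h2 : q ^ m * q ^ (n - m) = q ^ m * 1 := by
        rw [mul_one, ← pow_add, Nat.add_sub_cancel' hmn.le, h]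
      exact hq (n - m) (by omega) (mul_left_cancel₀ (pow_ne_zero m hq0) h2)
    intro m n h
    rcases lt_trichotomy m n with h' | h' | h'
    · exact absurd h (key _ _ h')
    · exact h'
    · exact absurd h.symm (key _ _ h')
  set lam : ℕ → K := fun n => (q ^ n)⁻¹ / (1 - q) with hlamdef
  have hlaminj : Function.Injective lam := by
    intro m n h
    apply hpowinj
    have h2 : (q ^ m)⁻¹ = (q ^ n)⁻¹ := by
      have := congrArg (fun t : K => t * (1 - q)) h
      simpa [hlamdef, div_mul_cancel₀, h1q] using this
    simpa using congrArg (fun t : K => t⁻¹) h2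
  -- membership in V
  have hVmem : ∀ n : ℕ, bas (Sum.inl n) ∈ V := by
    intro n
    rw [← SetLike.mem_coe, hV]
    exact Submodule.subset_span ⟨n, rfl⟩
  -- the quotient map as a function and its K-linearity
  set π : M → M ⧸ V := fun x => V.mkQ x with hπdef
  have hπK : ∀ (c : K) (x : M), π (c • x) = c • π x := by
    intro c x
    show V.mkQ (c • x) = c • V.mkQ x
    rw [← algebraMap_smul (QuantizedWeyl K q) c x, map_smul, algebraMap_smul]
  set πK : M →ₗ[K] M ⧸ V :=
    { toFun := π, map_add' := fun x y => map_add V.mkQ x y, map_smul' := hπK } with hπKdef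
  have hπ0 : ∀ n : ℕ, π (bas (Sum.inl n)) = 0 := by
    intro n
    exact (Submodule.Quotient.mk_eq_zero V).2 (hVmem n)
  set e : ℕ → M ⧸ V := fun n => π (bas (Sum.inr n)) with hedef
  -- Q-action commutes with K-smul on the quotient
  have hcomm : ∀ (r : QuantizedWeyl K q) (c : K) (x : M ⧸ V), r • c • x = c • r • x := by
    intro r c x
    rw [← algebraMap_smul (QuantizedWeyl K q) c x, ← mul_smul, ← Algebra.commutes, mul_smul,
      algebraMap_smul]
  -- actions of a and b on e n
  have hbe : ∀ n, QuantizedWeyl.b K q • e n = lam n • e n := by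
    intro n
    have h1 : QuantizedWeyl.b K q • e n = π (QuantizedWeyl.b K q • bas (Sum.inr n)) :=
      (map_smul V.mkQ _ _).symm
    rw [h1, hbw]
    show πK _ = _
    rw [map_add, map_smul, map_smul]
    show lam n • π _ + ((-1 : K) ^ n) • π _ = _
    rw [hπ0, smul_zero, add_zero]
  have hae : ∀ n, QuantizedWeyl.a K q • e n = q ^ n • (e n + e (n + 1)) := by
    intro n
    have h1 : QuantizedWeyl.a K q • e n = π (QuantizedWeyl.a K q • bas (Sum.inr n)) :=
      (map_smul V.mkQ _ _).symm
    rw [h1, haw]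
    show πK _ = _
    rw [map_smul, map_add]
    rfl
  -- the family e is a basis of the quotient
  have hspan : ⊤ ≤ Submodule.span K (Set.range e) := by
    rintro z -
    obtain ⟨x, rfl⟩ := V.mkQ_surjective z
    have hx : x ∈ Submodule.span K (Set.range bas) := by rw [bas.span_eq]; trivial
    induction hx using Submodule.span_induction with
    | mem y hy =>
      obtain ⟨i, rfl⟩ := hy
      cases i with
      | inl n =>
        show π _ ∈ _
        rw [hπ0]
        exact zero_mem _
      | inr n => exact Submodule.subset_span ⟨n, rfl⟩
    | zero => rw [map_zero]; exact zero_mem _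
    | add y z _ _ hy hz => rw [map_add]; exact add_mem hy hz
    | smul c y _ hy =>
      show π (c • y) ∈ _
      rw [hπK]
      exact Submodule.smul_mem _ _ hy
  have hli : LinearIndependent K e := by
    rw [linearIndependent_iff]
    intro l hl
    have hx0 : πK (Finsupp.linearCombination K (fun n => bas (Sum.inr n)) l) = 0 := by
      rw [Finsupp.apply_linearCombination]
      exact hl
    have hxV : Finsupp.linearCombination K (fun n => bas (Sum.inr n)) l ∈ V :=
      (Submodule.Quotient.mk_eq_zero V).1 hx0
    have hxspan : Finsupp.linearCombination K (fun n => bas (Sum.inr n)) l ∈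
        Submodule.span K (⇑bas '' Set.range Sum.inl) := by
      rw [← SetLike.mem_coe]
      have himg : ⇑bas '' Set.range Sum.inl = Set.range fun n : ℕ => bas (Sum.inl n) := by
        ext y
        constructor
        · rintro ⟨-, ⟨n, rfl⟩, rfl⟩; exact ⟨n, rfl⟩
        · rintro ⟨n, rfl⟩; exact ⟨Sum.inl n, ⟨n, rfl⟩, rfl⟩
      rw [himg, ← hV]
      exact hxV
    have hrepr : bas.repr (Finsupp.linearCombination K (fun n => bas (Sum.inr n)) l) =
        Finsupp.mapDomain Sum.inr l := by
      have : Finsupp.linearCombination K (fun n => bas (Sum.inr n)) l =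
          Finsupp.linearCombination K ⇑bas (Finsupp.mapDomain Sum.inr l) := by
        rw [Finsupp.linearCombination_mapDomain]
        rfl
      rw [this, bas.repr_linearCombination]
    have hsupp := bas.mem_span_image.1 hxspan
    rw [hrepr] at hsupp
    ext n
    by_contra hn
    have hmem : (Sum.inr n : ℕ ⊕ ℕ) ∈ (Finsupp.mapDomain (Sum.inr : ℕ → ℕ ⊕ ℕ) l).support := by
      rw [Finsupp.mem_support_iff, Finsupp.mapDomain_apply Sum.inr_injective]
      exact hn
    obtain ⟨k, hk⟩ := hsupp hmem
    exact Sum.inl_ne_inr hk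
  set basW : Module.Basis ℕ K (M ⧸ V) := Module.Basis.mk hli hspan with hbasWdef
  have hbasW : ⇑basW = e := Module.Basis.coe_mk _ _
  -- repr of the b-action
  have hBrepr : ∀ (x : M ⧸ V) (k : ℕ),
      basW.repr (QuantizedWeyl.b K q • x) k = lam k * basW.repr x k := by
    set LB : (M ⧸ V) →ₗ[K] (M ⧸ V) :=
      { toFun := fun x => QuantizedWeyl.b K q • x,
        map_add' := fun x y => smul_add _ x y,
        map_smul' := fun c x => hcomm _ c x } with hLBdef
    intro x k
    have hmaps : (Finsupp.lapply k ∘ₗ (basW.repr : (M ⧸ V) →ₗ[K] (ℕ →₀ K))) ∘ₗ LB =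
        lam k • (Finsupp.lapply k ∘ₗ (basW.repr : (M ⧸ V) →ₗ[K] (ℕ →₀ K))) := by
      apply basW.ext
      intro j
      show basW.repr (QuantizedWeyl.b K q • basW j) k = lam k • basW.repr (basW j) k
      have h1 : basW j = e j := congrFun hbasW j
      rw [show QuantizedWeyl.b K q • basW j = lam j • basW j by rw [h1, hbe, ← h1],
        map_smul, basW.repr_self]
      rcases eq_or_ne j k with rfl | hjk
      · simp
      · simp [Finsupp.single_apply, hjk]
    have := DFunLike.congr_fun hmaps x
    simp at this
    exact this
  -- K-scaling stays in Q-submodules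
  have hNK : ∀ (N : Submodule (QuantizedWeyl K q) (M ⧸ V)) (c : K) (y : M ⧸ V),
      y ∈ N → c • y ∈ N := by
    intro N c y hy
    rw [← algebraMap_smul (QuantizedWeyl K q) c y]
    exact N.smul_mem _ hy
  -- the K-submodules P n and the Q-submodules Wn n
  set P : ℕ → Submodule K (M ⧸ V) := fun n => Submodule.span K (e '' {m : ℕ | n ≤ m}) with hPdef
  have hePmem : ∀ n m : ℕ, n ≤ m → e m ∈ P n := fun n m hm => Submodule.subset_span ⟨m, hm, rfl⟩
  have hPa : ∀ n, ∀ x ∈ P n, QuantizedWeyl.a K q • x ∈ P n := by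
    intro n x hx
    induction hx using Submodule.span_induction with
    | mem y hy =>
      obtain ⟨m, hm, rfl⟩ := hy
      rw [hae]
      exact Submodule.smul_mem _ _ (add_mem (hePmem n m hm) (hePmem n (m + 1) (le_trans (show n ≤ m from hm) (Nat.le_succ m))))
    | zero => rw [smul_zero]; exact zero_mem _
    | add y z _ _ hy hz => rw [smul_add]; exact add_mem hy hz
    | smul c y _ hy => rw [hcomm]; exact Submodule.smul_mem _ _ hy
  have hPb : ∀ n, ∀ x ∈ P n, QuantizedWeyl.b K q • x ∈ P n := by
    intro n x hx
    induction hx using Submodule.span_induction with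
    | mem y hy =>
      obtain ⟨m, hm, rfl⟩ := hy
      rw [hbe]
      exact Submodule.smul_mem _ _ (hePmem n m hm)
    | zero => rw [smul_zero]; exact zero_mem _
    | add y z _ _ hy hz => rw [smul_add]; exact add_mem hy hz
    | smul c y _ hy => rw [hcomm]; exact Submodule.smul_mem _ _ hy
  set Wn : ℕ → Submodule (QuantizedWeyl K q) (M ⧸ V) :=
    fun n => auxToQ (P n) (hPa n) (hPb n) with hWndef
  have hWnmem : ∀ (n : ℕ) (x : M ⧸ V), x ∈ Wn n ↔ x ∈ P n := fun n x => Iff.rfl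
  refine ⟨Wn, ?_, ?_, ?_, ?_, ?_⟩
  · -- carrier description
    intro n
    have h1 : (V.mkQ '' ((Submodule.span K ((fun m : ℕ => bas (Sum.inr m)) ''
        {m : ℕ | n ≤ m}) : Submodule K M) : Set M)) =
        ((Submodule.map πK (Submodule.span K ((fun m : ℕ => bas (Sum.inr m)) ''
        {m : ℕ | n ≤ m}))) : Set (M ⧸ V)) := rfl
    rw [h1, Submodule.map_span, Set.image_image]
    rfl
  · -- Wn 0 = ⊤
    apply eq_top_iff.2
    intro x _
    show x ∈ P 0
    have h0 : {m : ℕ | 0 ≤ m} = Set.univ := Set.eq_univ_of_forall fun m => Nat.zero_le m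
    show x ∈ Submodule.span K (e '' {m : ℕ | 0 ≤ m})
    rw [h0, Set.image_univ]
    exact hspan trivial
  · -- strictly decreasing
    apply strictAnti_nat_of_succ_lt
    intro n
    apply lt_of_le_of_ne
    · intro x hx
      show x ∈ P n
      exact Submodule.span_mono
        (Set.image_mono fun m hm => le_trans (Nat.le_succ n) hm) hx
    · intro heq
      have hen : e n ∈ Submodule.span K (e '' {m : ℕ | n + 1 ≤ m}) := by
        have : e n ∈ Wn (n + 1) := by rw [heq]; exact hePmem n n le_rfl
        exact this
      rw [← hbasW] at hen
      have hsupp := basW.mem_span_image.1 hen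
      rw [basW.repr_self] at hsupp
      have hmem : n ∈ (Finsupp.single n (1 : K)).support := by
        simp [Finsupp.support_single_ne_zero]
      have := hsupp hmem
      simp only [Set.mem_setOf_eq] at this
      omega
  · -- classification of submodules
    intro N hN
    obtain ⟨x, hxN, hx0⟩ := (Submodule.ne_bot_iff N).1 hN
    have hextract : ∀ (s : Finset ℕ) (y : M ⧸ V), (basW.repr y).support = s → y ∈ N →
        ∀ k, basW.repr y k ≠ 0 → e k ∈ N := by
      intro s
      induction s using Finset.strongInduction with
      | _ s ih =>
        intro y hs hyN k hk
        by_cases hsub : (basW.repr y).support ⊆ {k}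
        · set c := basW.repr y k with hc
          have hy : y = c • basW k := by
            apply basW.repr.injective
            rw [map_smul, basW.repr_self, Finsupp.smul_single, smul_eq_mul, mul_one]
            exact Finsupp.support_subset_singleton.1 hsub
          have h2 := hNK N c⁻¹ y hyN
          have h3 : c⁻¹ • y = basW k := by
            rw [hy, smul_smul, inv_mul_cancel₀ hk, one_smul]
          rw [h3] at h2
          rw [← hbasW]
          exact h2
        · obtain ⟨m, hm, hmk⟩ := Finset.not_subset.1 hsub
          have hmk' : m ≠ k := by simpa using hmk
          set z := QuantizedWeyl.b K q • y - lam m • y with hzdef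
          have hzN : z ∈ N := sub_mem (N.smul_mem _ hyN) (hNK N _ _ hyN)
          have hzrepr : ∀ j, basW.repr z j = (lam j - lam m) * basW.repr y j := by
            intro j
            have h1 : basW.repr z = basW.repr (QuantizedWeyl.b K q • y) -
                basW.repr (lam m • y) := by rw [hzdef, map_sub]
            rw [h1, Finsupp.sub_apply, hBrepr, map_smul, Finsupp.smul_apply, smul_eq_mul,
              sub_mul]
          have hzsupp : (basW.repr z).support = s.erase m := by
            ext j
            rw [Finsupp.mem_support_iff, hzrepr, Finset.mem_erase, ← hs,
              Finsupp.mem_support_iff, mul_ne_zero_iff, sub_ne_zero]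
            constructor
            · rintro ⟨h1, h2⟩
              exact ⟨fun hjm => h1 (by rw [hjm]), h2⟩
            · rintro ⟨h1, h2⟩
              exact ⟨fun hl => h1 (hlaminj hl), h2⟩
          have hss : s.erase m ⊂ s := Finset.erase_ssubset (hs ▸ hm)
          have hzk : basW.repr z k ≠ 0 := by
            rw [hzrepr]
            exact mul_ne_zero (sub_ne_zero.2 fun hl => hmk' (hlaminj hl).symm) hk
          exact ih _ hss z hzsupp hzN k hzk
    have hladder : ∀ k : ℕ, e k ∈ N → e (k + 1) ∈ N := by
      intro k hk
      have h1 : QuantizedWeyl.a K q • e k ∈ N := N.smul_mem _ hk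
      have h2 := hNK N (q ^ k)⁻¹ _ h1
      rw [hae, smul_smul, inv_mul_cancel₀ (pow_ne_zero k hq0), one_smul] at h2
      have h3 := sub_mem h2 hk
      rwa [add_sub_cancel_left] at h3
    have hEx : ∃ n : ℕ, basW.repr x n ≠ 0 := by
      by_contra h
      push_neg at h
      exact hx0 (basW.repr.map_eq_zero_iff.1 (Finsupp.ext h))
    have hSex : ∃ n : ℕ, ∃ y ∈ N, basW.repr y n ≠ 0 := by
      obtain ⟨n, hn⟩ := hEx
      exact ⟨n, x, hxN, hn⟩
    set n₀ := Nat.find hSex with hn₀def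
    obtain ⟨y₀, hy₀N, hy₀⟩ := Nat.find_spec hSex
    have hen₀ : e n₀ ∈ N := hextract _ y₀ rfl hy₀N n₀ hy₀
    have hallm : ∀ m : ℕ, n₀ ≤ m → e m ∈ N := by
      intro m hm
      induction m, hm using Nat.le_induction with
      | base => exact hen₀
      | succ m hm ihm => exact hladder m ihm
    refine ⟨n₀, le_antisymm ?_ ?_⟩
    · intro z hz
      show z ∈ P n₀
      show z ∈ Submodule.span K (e '' {m : ℕ | n₀ ≤ m})
      rw [← hbasW]
      apply basW.mem_span_image.2
      intro k hk
      rw [Finset.mem_coe, Finsupp.mem_support_iff] at hk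
      exact Nat.find_min' hSex ⟨z, hz, hk⟩
    · intro z hz
      have hz' : z ∈ Submodule.span K (e '' {m : ℕ | n₀ ≤ m}) := hz
      have hle : Submodule.span K (e '' {m : ℕ | n₀ ≤ m}) ≤ N.restrictScalars K := by
        apply Submodule.span_le.2
        rintro _ ⟨m, hm, rfl⟩
        exact hallm m hm
      exact hle hz'
  · -- non-isomorphism
    have key : ∀ m n : ℕ, m < n → (Wn m ≃ₗ[QuantizedWeyl K q] Wn n) → False := by
      intro m n hmn φ
      have hxm : e m ∈ Wn m := hePmem m m le_rfl
      set x₀ : Wn m := ⟨e m, hxm⟩ with hx₀def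
      have hx₀0 : x₀ ≠ 0 := by
        intro h
        have h2 : e m = 0 := congrArg Subtype.val h
        rw [← hbasW] at h2
        exact basW.ne_zero m h2
      have hBx₀ : QuantizedWeyl.b K q • x₀ = algebraMap K (QuantizedWeyl K q) (lam m) • x₀ := by
        apply Subtype.ext
        rw [Submodule.coe_smul, Submodule.coe_smul]
        show QuantizedWeyl.b K q • e m = algebraMap K (QuantizedWeyl K q) (lam m) • e m
        rw [hbe, algebraMap_smul]
      set y := φ x₀ with hydef
      have hy0 : (y : M ⧸ V) ≠ 0 := by
        intro h
        have h1 : y = 0 := ZeroMemClass.coe_eq_zero.1 h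
        have h3 := congrArg φ.symm h1
        rw [hydef, LinearEquiv.symm_apply_apply, map_zero] at h3
        exact hx₀0 h3
      have hBy : QuantizedWeyl.b K q • (y : M ⧸ V) = lam m • (y : M ⧸ V) := by
        have h1 : QuantizedWeyl.b K q • y = algebraMap K (QuantizedWeyl K q) (lam m) • y := by
          rw [hydef, ← map_smul, ← map_smul, hBx₀]
        have h2 := congrArg Subtype.val h1
        rw [Submodule.coe_smul, Submodule.coe_smul, algebraMap_smul] at h2
        exact h2
      have hyEx : ∃ k, basW.repr (y : M ⧸ V) k ≠ 0 := by
        by_contra h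
        push_neg at h
        exact hy0 (basW.repr.map_eq_zero_iff.1 (Finsupp.ext h))
      obtain ⟨k, hk⟩ := hyEx
      have heig : lam k * basW.repr (y : M ⧸ V) k = lam m * basW.repr (y : M ⧸ V) k := by
        calc lam k * basW.repr (y : M ⧸ V) k
            = basW.repr (QuantizedWeyl.b K q • (y : M ⧸ V)) k := (hBrepr _ k).symm
          _ = basW.repr (lam m • (y : M ⧸ V)) k := by rw [hBy]
          _ = lam m * basW.repr (y : M ⧸ V) k := by
              rw [map_smul, Finsupp.smul_apply, smul_eq_mul]
      have hkm : k = m := hlaminj (mul_right_cancel₀ hk heig)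
      have hyP : (y : M ⧸ V) ∈ Submodule.span K (e '' {j : ℕ | n ≤ j}) := y.2
      rw [← hbasW] at hyP
      have hsupp := basW.mem_span_image.1 hyP
      have hnk : n ≤ k := hsupp (by rw [Finset.mem_coe, Finsupp.mem_support_iff]; exact hk)
      omega
    intro m n hmn
    constructor
    intro φ
    rcases hmn.lt_or_gt with h | h
    · exact key m n h φ
    · exact key n m h φ.symm
end
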